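/- arXiv:2410.02617 — 2 statements merged into one kernel-verified Lean document; each statement's English description precedes it below -/
import Mathlib

section
/- Let A, B be tadpole matrices with head parameters k ≠ 0 and ℓ = p − k (so AB is diagonal). Then σ(A)·σ(B) equals the set of all p²-th roots of unity {1, ξ, ξ², …, ξ^{p²−1}}. -/
open Matrix

/-- The `p × p` cyclic permutation matrix. -/
def cycleMatrix (p : ℕ) : Matrix (Fin p) (Fin p) ℂ :=
  Matrix.of fun i j => if (j : ℕ) = ((i : ℕ) + 1) % p then 1 else 0

/-- The fixed primitive `p²`-th root of unity `ξ = e^{2πi/p²}`. -/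
noncomputable def xi (p : ℕ) : ℂ := Complex.exp (2 * Real.pi * Complex.I / (p ^ 2))

/-- The tadpole matrix with head `D C^k` (where `D = diagonal d`) and tail
`diag(ξ^{0·k + a_0 p}, ξ^{1·k + a_1 p}, …, ξ^{(p-1)k + a_{p-1} p})`.
We index the `2p × 2p` matrix by `Fin p ⊕ Fin p`. -/
noncomputable def tadpole (p : ℕ) (d : Fin p → ℂ) (k : ℕ) (a : Fin p → ℕ) :
    Matrix (Fin p ⊕ Fin p) (Fin p ⊕ Fin p) ℂ :=
  Matrix.fromBlocks (Matrix.diagonal d * cycleMatrix p ^ k) 0 0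
    (Matrix.diagonal fun j : Fin p => xi p ^ ((j : ℕ) * k + a j * p))

/-- Membership in the set `𝒯` of tadpole matrices: `D` is unitary diagonal of
determinant one, `k ∈ {0, …, p-1}`, `a_j ∈ {0, …, p-1}` and `a_0 = 0` (so the first
tail entry is `1`). -/
def IsTadpole (p : ℕ) (A : Matrix (Fin p ⊕ Fin p) (Fin p ⊕ Fin p) ℂ) : Prop :=
  ∃ (d : Fin p → ℂ) (k : ℕ) (a : Fin p → ℕ),
    (∀ i, ‖d i‖ = 1) ∧ (∏ i, d i = 1) ∧ k < p ∧ (∀ j, a j < p) ∧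
    (∀ j : Fin p, (j : ℕ) = 0 → a j = 0) ∧ A = tadpole p d k a

open Pointwise

section Aux
variable {p : ℕ}

lemma cycle_pow_apply (hp : 0 < p) (m : ℕ) (i j : Fin p) :
    (cycleMatrix p ^ m) i j = if (j : ℕ) = ((i : ℕ) + m) % p then 1 else 0 := by
  induction m generalizing j with
  | zero =>
    simp only [pow_zero, Matrix.one_apply, Nat.add_zero, Nat.mod_eq_of_lt i.isLt]
    simp [Fin.ext_iff, eq_comm]
  | succ m ih =>
    rw [pow_succ, Matrix.mul_apply]
    set c : Fin p := ⟨((i : ℕ) + m) % p, Nat.mod_lt _ hp⟩ with hc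
    have hcond : ∀ l : Fin p, ((l : ℕ) = ((i : ℕ) + m) % p) = (l = c) := by
      intro l; simp [Fin.ext_iff, hc]
    calc (∑ l, (cycleMatrix p ^ m) i l * cycleMatrix p l j)
        = ∑ l, (if l = c then cycleMatrix p l j else 0) := by
          refine Finset.sum_congr rfl fun l _ => ?_
          rw [ih]; simp only [hcond]
          split <;> simp
      _ = cycleMatrix p c j := by simp
      _ = if (j : ℕ) = ((i : ℕ) + (m + 1)) % p then 1 else 0 := by
          show (if (j : ℕ) = ((c : ℕ) + 1) % p then (1:ℂ) else 0) = _
          have : ((c : ℕ) + 1) % p = ((i : ℕ) + (m + 1)) % p := by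
            simp only [hc]; rw [Nat.mod_add_mod]; ring_nf
          rw [this]

lemma head_pow_apply (hp : 0 < p) (d : Fin p → ℂ) (k m : ℕ) (i j : Fin p) :
    ((Matrix.diagonal d * cycleMatrix p ^ k) ^ m) i j =
      if (j : ℕ) = ((i : ℕ) + m * k) % p then
        (∏ t ∈ Finset.range m, d ⟨((i : ℕ) + t * k) % p, Nat.mod_lt _ hp⟩) else 0 := by
  induction m generalizing j with
  | zero =>
    simp only [pow_zero, Matrix.one_apply, Nat.zero_mul, Nat.add_zero,
      Nat.mod_eq_of_lt i.isLt, Finset.range_zero, Finset.prod_empty]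
    simp [Fin.ext_iff, eq_comm]
  | succ m ih =>
    rw [pow_succ, Matrix.mul_apply]
    set c : Fin p := ⟨((i : ℕ) + m * k) % p, Nat.mod_lt _ hp⟩ with hc
    have key : ∀ l : Fin p, ((Matrix.diagonal d * cycleMatrix p ^ k) ^ m) i l
        = if l = c then (∏ t ∈ Finset.range m, d ⟨((i : ℕ) + t * k) % p, Nat.mod_lt _ hp⟩) else 0 := by
      intro l; rw [ih]
      have : ((l : ℕ) = ((i : ℕ) + m * k) % p) = (l = c) := by simp [Fin.ext_iff, hc]
      simp only [this]
    calc (∑ l, ((Matrix.diagonal d * cycleMatrix p ^ k) ^ m) i l *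
            (Matrix.diagonal d * cycleMatrix p ^ k) l j)
        = (∏ t ∈ Finset.range m, d ⟨((i : ℕ) + t * k) % p, Nat.mod_lt _ hp⟩) *
            (Matrix.diagonal d * cycleMatrix p ^ k) c j := by
          rw [Finset.sum_congr rfl fun l _ => by rw [key l, ite_mul, zero_mul]]
          simp
      _ = _ := by
          rw [Matrix.diagonal_mul, cycle_pow_apply hp]
          have hmod : ((c : ℕ) + k) % p = ((i : ℕ) + (m + 1) * k) % p := by
            simp only [hc]; rw [Nat.mod_add_mod]; ring_nf
          rw [hmod, Finset.prod_range_succ]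
          split <;> simp [hc, mul_comm]

lemma head_pow_self (hp : p.Prime) (d : Fin p → ℂ) (hdet : ∏ i, d i = 1) (k : ℕ)
    (hk : ¬ p ∣ k) : (Matrix.diagonal d * cycleMatrix p ^ k) ^ p = 1 := by
  have hp0 : 0 < p := hp.pos
  haveI : Fact p.Prime := ⟨hp⟩
  ext i j
  rw [head_pow_apply hp0]
  have hm : ((i : ℕ) + p * k) % p = (i : ℕ) := by
    rw [Nat.add_mul_mod_self_left, Nat.mod_eq_of_lt i.isLt]
  rw [hm]
  have hprod : (∏ t ∈ Finset.range p, d ⟨((i : ℕ) + t * k) % p, Nat.mod_lt _ hp0⟩) = 1 := by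
    rw [← Fin.prod_univ_eq_prod_range (fun t => d ⟨((i : ℕ) + t * k) % p, Nat.mod_lt _ hp0⟩)]
    rw [← hdet]
    apply Fintype.prod_bijective (fun t : Fin p => (⟨((i : ℕ) + (t : ℕ) * k) % p, Nat.mod_lt _ hp0⟩ : Fin p))
    · rw [Finite.injective_iff_bijective.symm]
      intro t₁ t₂ h
      have h' : (((i : ℕ) + (t₁ : ℕ) * k : ℕ) : ZMod p) = (((i : ℕ) + (t₂ : ℕ) * k : ℕ) : ZMod p) := by
        have := congrArg (fun x : Fin p => ((x : ℕ) : ZMod p)) h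
        simpa only [ZMod.natCast_mod] using this
      push_cast at h'
      have hk0 : ((k : ℕ) : ZMod p) ≠ 0 := by
        rw [Ne, ZMod.natCast_eq_zero_iff]; exact hk
      have ht : ((t₁ : ℕ) : ZMod p) = ((t₂ : ℕ) : ZMod p) := by
        exact mul_right_cancel₀ hk0 (add_left_cancel h')
      have := congrArg ZMod.val ht
      rwa [ZMod.val_cast_of_lt t₁.isLt, ZMod.val_cast_of_lt t₂.isLt, ← Fin.ext_iff] at this
    · intro t; rfl
  rw [hprod, Matrix.one_apply]
  simp [Fin.ext_iff, eq_comm]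

lemma spec_conj {n : Type*} [Fintype n] [DecidableEq n] (A U V : Matrix n n ℂ)
    (h1 : U * V = 1) (h2 : V * U = 1) : spectrum ℂ (U * A * V) = spectrum ℂ A := by
  ext x
  have key : algebraMap ℂ (Matrix n n ℂ) x - U * A * V
      = U * (algebraMap ℂ (Matrix n n ℂ) x - A) * V := by
    rw [Matrix.mul_sub, Matrix.sub_mul, Algebra.algebraMap_eq_smul_one]
    congr 1
    rw [Matrix.mul_smul, Matrix.smul_mul, mul_one, ← Matrix.mul_smul]
    rw [show U * (x • V) = x • (U * V) from Matrix.mul_smul U x V, h1]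
  have hU : IsUnit U := ⟨⟨U, V, h1, h2⟩, rfl⟩
  have hV : IsUnit V := ⟨⟨V, U, h2, h1⟩, rfl⟩
  simp only [spectrum.mem_iff, key, not_iff_not]
  constructor
  · intro h
    have hM : algebraMap ℂ (Matrix n n ℂ) x - A
        = V * (U * (algebraMap ℂ (Matrix n n ℂ) x - A) * V) * U := by
      simp only [← mul_assoc]
      rw [h2, one_mul, mul_assoc, h2, mul_one]
    rw [hM]
    exact (hV.mul h).mul hU
  · intro h
    exact (hU.mul h).mul hV
open Matrix

lemma zeta_pow_mod {ζ : ℂ} {p : ℕ} (hζ : ζ ^ p = 1) (a : ℕ) : ζ ^ a = ζ ^ (a % p) := by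
  conv_lhs => rw [← Nat.mod_add_div a p, pow_add, pow_mul, hζ, one_pow, mul_one]

lemma head_spectrum (p : ℕ) (hp : p.Prime) (d : Fin p → ℂ)
    (hdet : ∏ i, d i = 1) (k : ℕ) (hk1 : 1 ≤ k) (hkp : k < p) :
    spectrum ℂ (Matrix.diagonal d * cycleMatrix p ^ k) = {x : ℂ | x ^ p = 1} := by
  have hp0 : 0 < p := hp.pos
  haveI : NeZero p := ⟨hp.ne_zero⟩
  haveI : Nonempty (Fin p) := ⟨⟨0, hp0⟩⟩
  set A := Matrix.diagonal d * cycleMatrix p ^ k with hA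
  have hdvd : ¬ p ∣ k := fun h => absurd (Nat.le_of_dvd (by omega) h) (by omega)
  have hAp : A ^ p = 1 := head_pow_self hp d hdet k hdvd
  -- subset direction
  have hsub : spectrum ℂ A ⊆ {x : ℂ | x ^ p = 1} := by
    intro x hx
    have h1 : x ^ p ∈ spectrum ℂ (A ^ p) :=
      spectrum.pow_image_subset A p ⟨x, hx, rfl⟩
    rw [hAp, spectrum.one_eq] at h1
    simpa using h1
  -- primitive root setup
  set ζ : ℂ := Complex.exp (2 * Real.pi * Complex.I / p) with hζdef
  have hζ : IsPrimitiveRoot ζ p := Complex.isPrimitiveRoot_exp p hp.ne_zero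
  have hζp : ζ ^ p = 1 := hζ.pow_eq_one
  have hζ0 : ζ ≠ 0 := by rw [hζdef]; exact Complex.exp_ne_zero _
  set c : ℂ := ζ ^ (p - k) with hcdef
  have hc : IsPrimitiveRoot c p :=
    hζ.pow_of_coprime (p - k) ((hp.coprime_iff_not_dvd.mpr
      (fun h => absurd (Nat.le_of_dvd (by omega) h) (by omega))).symm)
  have hc0 : c ≠ 0 := pow_ne_zero _ hζ0
  -- conjugation identity
  set W : Matrix (Fin p) (Fin p) ℂ := Matrix.diagonal (fun i : Fin p => ζ ^ (i : ℕ)) with hW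
  set W' : Matrix (Fin p) (Fin p) ℂ :=
    Matrix.diagonal (fun i : Fin p => ζ ^ (p - (i : ℕ))) with hW'
  have hWW' : W * W' = 1 := by
    rw [hW, hW', Matrix.diagonal_mul_diagonal]
    have : ∀ i : Fin p, ζ ^ (i : ℕ) * ζ ^ (p - (i : ℕ)) = 1 := by
      intro i
      rw [← pow_add, show (i : ℕ) + (p - (i : ℕ)) = p by omega, hζp]
    simp only [this, Matrix.diagonal_one]
  have hW'W : W' * W = 1 := by
    rw [hW, hW', Matrix.diagonal_mul_diagonal]
    have : ∀ i : Fin p, ζ ^ (p - (i : ℕ)) * ζ ^ (i : ℕ) = 1 := by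
      intro i
      rw [← pow_add, show (p - (i : ℕ)) + (i : ℕ) = p by omega, hζp]
    simp only [this, Matrix.diagonal_one]
  have hconj : W * A * W' = c • A := by
    ext i j
    rw [hA, hW, hW']
    rw [show Matrix.diagonal (fun i : Fin p => ζ ^ (i : ℕ)) * (Matrix.diagonal d * cycleMatrix p ^ k) *
        Matrix.diagonal (fun i : Fin p => ζ ^ (p - (i : ℕ)))
      = Matrix.diagonal (fun i : Fin p => ζ ^ (i : ℕ)) * ((Matrix.diagonal d * cycleMatrix p ^ k) *
        Matrix.diagonal (fun i : Fin p => ζ ^ (p - (i : ℕ)))) from mul_assoc _ _ _]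
    rw [Matrix.diagonal_mul, Matrix.mul_diagonal, Matrix.smul_apply, Matrix.diagonal_mul,
      cycle_pow_apply hp0]
    by_cases h : (j : ℕ) = ((i : ℕ) + k) % p
    · rw [if_pos h]
      have hexp : ζ ^ (i : ℕ) * ζ ^ (p - (j : ℕ)) = c := by
        rw [← pow_add, hcdef]
        rcases Nat.lt_or_ge ((i : ℕ) + k) p with hlt | hge
        · rw [Nat.mod_eq_of_lt hlt] at h
          congr 1; omega
        · have hj : (j : ℕ) = (i : ℕ) + k - p := by
            rw [h]; rw [Nat.mod_eq_sub_mod hge, Nat.mod_eq_of_lt (by omega)]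
          rw [hj, show (i : ℕ) + (p - ((i : ℕ) + k - p)) = p + (p - k) by omega,
            pow_add, hζp, one_mul]
      rw [smul_eq_mul, ← hexp]; ring
    · rw [if_neg h]; simp
  have hstep : ∀ x ∈ spectrum ℂ A, c * x ∈ spectrum ℂ A := by
    intro x hx
    have h1 : (Units.mk0 c hc0) • x ∈ (Units.mk0 c hc0) • spectrum ℂ A :=
      Set.smul_mem_smul_set hx
    rw [← spectrum.unit_smul_eq_smul] at h1
    have h2 : (Units.mk0 c hc0) • A = c • A := rfl
    have h3 : (Units.mk0 c hc0) • x = c * x := rfl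
    rw [h2, ← hconj, spec_conj _ _ _ hWW' hW'W] at h1
    rwa [h3] at h1
  have hiter : ∀ (m : ℕ), ∀ x ∈ spectrum ℂ A, c ^ m * x ∈ spectrum ℂ A := by
    intro m
    induction m with
    | zero => intro x hx; simpa using hx
    | succ m ih =>
      intro x hx
      have := hstep _ (ih x hx)
      rwa [← mul_assoc, mul_comm c (c ^ m), ← pow_succ] at this
  -- conclude
  refine Set.Subset.antisymm hsub ?_
  obtain ⟨μ, hμ⟩ := spectrum.nonempty_of_isAlgClosed_of_finiteDimensional ℂ A
  intro x hx
  have hμp : μ ^ p = 1 := hsub hμ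
  have hμ0 : μ ≠ 0 := by
    intro h; rw [h, zero_pow hp.ne_zero] at hμp; exact zero_ne_one hμp
  have hxp : (x * μ⁻¹) ^ p = 1 := by
    rw [mul_pow, hx, one_mul, inv_pow, hμp]; simp
  obtain ⟨m, hm, hmx⟩ := hc.eq_pow_of_pow_eq_one hxp
  have : x = c ^ m * μ := by
    field_simp at hmx
    rw [← hmx]
  rw [this]
  exact hiter m μ hμ

lemma spectrum_fromBlocks_diag {n m : Type*} [Fintype n] [DecidableEq n] [Fintype m]
    [DecidableEq m] (A : Matrix n n ℂ) (D : Matrix m m ℂ) :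
    spectrum ℂ (Matrix.fromBlocks A 0 0 D) = spectrum ℂ A ∪ spectrum ℂ D := by
  ext x
  have h1 : algebraMap ℂ (Matrix (n ⊕ m) (n ⊕ m) ℂ) x - Matrix.fromBlocks A 0 0 D
      = Matrix.fromBlocks (algebraMap ℂ (Matrix n n ℂ) x - A) 0 0
          (algebraMap ℂ (Matrix m m ℂ) x - D) := by
    rw [Algebra.algebraMap_eq_smul_one, Algebra.algebraMap_eq_smul_one,
      Algebra.algebraMap_eq_smul_one, ← Matrix.fromBlocks_one, Matrix.fromBlocks_smul]
    ext (i | i) (j | j) <;> simp [Matrix.fromBlocks]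
  simp only [spectrum.mem_iff, Set.mem_union, h1, Matrix.isUnit_iff_isUnit_det,
    Matrix.det_fromBlocks_zero₁₂, isUnit_iff_ne_zero, ne_eq, not_not, mul_eq_zero]

lemma range_xi_eq (p : ℕ) (hp : p.Prime) :
    Set.range (fun m : Fin (p ^ 2) => xi p ^ (m : ℕ)) = {x : ℂ | x ^ p ^ 2 = 1} := by
  have hne : (p ^ 2 : ℕ) ≠ 0 := pow_ne_zero 2 hp.ne_zero
  haveI : NeZero (p ^ 2) := ⟨hne⟩
  have hprim : IsPrimitiveRoot (xi p) (p ^ 2) := by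
    have h := Complex.isPrimitiveRoot_exp (p ^ 2) hne
    rw [show ((p ^ 2 : ℕ) : ℂ) = ((p : ℂ)) ^ 2 by push_cast; ring] at h
    exact h
  ext x
  constructor
  · rintro ⟨m, rfl⟩
    show (xi p ^ (m : ℕ)) ^ p ^ 2 = 1
    rw [← pow_mul, mul_comm, pow_mul, hprim.pow_eq_one, one_pow]
  · intro hx
    obtain ⟨i, hi, hix⟩ := hprim.eq_pow_of_pow_eq_one hx
    exact ⟨⟨i, hi⟩, hix⟩


open Pointwise in
/-- If `A`, `B` are tadpole matrices with head parameters `k ≠ 0` and `ℓ = p - k`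
(so that `AB` is diagonal), then `σ(A)·σ(B)` is the set of all `p²`-th roots of
unity `{1, ξ, ξ², …, ξ^{p²-1}}`. -/
theorem tadpole_spectrum_mul_eq_roots_of_unity (p : ℕ) (hp : p.Prime) (hodd : Odd p)
    (dA dB : Fin p → ℂ) (k : ℕ) (a b : Fin p → ℕ)
    (hdA : ∀ i, ‖dA i‖ = 1) (hdetA : ∏ i, dA i = 1)
    (hk1 : 1 ≤ k) (hk2 : k ≤ p - 1)
    (ha : ∀ j, a j < p) (ha0 : ∀ j : Fin p, (j : ℕ) = 0 → a j = 0)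
    (hdB : ∀ i, ‖dB i‖ = 1) (hdetB : ∏ i, dB i = 1)
    (hb : ∀ j, b j < p) (hb0 : ∀ j : Fin p, (j : ℕ) = 0 → b j = 0) :
    spectrum ℂ (tadpole p dA k a) * spectrum ℂ (tadpole p dB (p - k) b) =
      Set.range (fun m : Fin (p ^ 2) => xi p ^ (m : ℕ)) := by
  have hp2 := hp.two_le
  have hp0 : 0 < p := hp.pos
  haveI : Fact p.Prime := ⟨hp⟩
  haveI : NeZero p := ⟨hp.ne_zero⟩
  have hkp : k < p := by omega
  set ℓ : ℕ := p - k with hℓ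
  have hℓ1 : 1 ≤ ℓ := by omega
  have hℓp : ℓ < p := by omega
  have hprim : IsPrimitiveRoot (xi p) (p ^ 2) := by
    have h := Complex.isPrimitiveRoot_exp (p ^ 2) (pow_ne_zero 2 hp.ne_zero)
    rw [show ((p ^ 2 : ℕ) : ℂ) = ((p : ℂ)) ^ 2 by push_cast; ring] at h
    exact h
  have hxipp : xi p ^ (p ^ 2) = 1 := hprim.pow_eq_one
  have hxi0 : xi p ≠ 0 := by rw [xi]; exact Complex.exp_ne_zero _
  -- spectra of the two tadpoles
  have hSA : spectrum ℂ (tadpole p dA k a) =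
      {x : ℂ | x ^ p = 1} ∪ Set.range (fun j : Fin p => xi p ^ ((j : ℕ) * k + a j * p)) := by
    rw [tadpole, spectrum_fromBlocks_diag, head_spectrum p hp dA hdetA k hk1 hkp,
      spectrum_diagonal]
  have hSB : spectrum ℂ (tadpole p dB ℓ b) =
      {x : ℂ | x ^ p = 1} ∪ Set.range (fun j : Fin p => xi p ^ ((j : ℕ) * ℓ + b j * p)) := by
    rw [tadpole, spectrum_fromBlocks_diag, head_spectrum p hp dB hdetB ℓ hℓ1 hℓp,
      spectrum_diagonal]
  rw [range_xi_eq p hp, hSA, hSB]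
  ext x
  constructor
  · rintro ⟨u, hu, v, hv, rfl⟩
    have hroot : ∀ z : ℂ, z ^ p = 1 ∨ (∃ e : ℕ, z = xi p ^ e) → z ^ p ^ 2 = 1 := by
      rintro z (hz | ⟨e, rfl⟩)
      · rw [pow_two, pow_mul, hz, one_pow]
      · rw [← pow_mul, mul_comm, pow_mul, hxipp, one_pow]
    have hu2 : u ^ p ^ 2 = 1 := by
      apply hroot
      rcases hu with hu | ⟨j, hj⟩
      · exact Or.inl hu
      · exact Or.inr ⟨_, hj.symm⟩
    have hv2 : v ^ p ^ 2 = 1 := by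
      apply hroot
      rcases hv with hv | ⟨j, hj⟩
      · exact Or.inl hv
      · exact Or.inr ⟨_, hj.symm⟩
    show (u * v) ^ p ^ 2 = 1
    rw [mul_pow, hu2, hv2, one_mul]
  · intro hx
    obtain ⟨i, hi, hix⟩ := hprim.eq_pow_of_pow_eq_one hx
    -- choose j with j * ℓ ≡ i mod p
    have hℓ0 : ((ℓ : ℕ) : ZMod p) ≠ 0 := by
      rw [Ne, ZMod.natCast_eq_zero_iff]
      exact fun h => absurd (Nat.le_of_dvd (by omega) h) (by omega)
    set z : ZMod p := (i : ZMod p) * ((ℓ : ℕ) : ZMod p)⁻¹ with hz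
    set j : Fin p := ⟨z.val, ZMod.val_lt z⟩ with hj
    have hjl : (((j : ℕ) : ZMod p)) * ((ℓ : ℕ) : ZMod p) = (i : ZMod p) := by
      rw [show (((j : ℕ) : ZMod p)) = z from ZMod.natCast_rightInverse z, hz,
        mul_assoc, inv_mul_cancel₀ hℓ0, mul_one]
    set e : ℕ := (j : ℕ) * ℓ + b j * p with he
    set v : ℂ := xi p ^ e with hv
    have hvmem : v ∈ {x : ℂ | x ^ p = 1} ∪
        Set.range (fun j : Fin p => xi p ^ ((j : ℕ) * ℓ + b j * p)) :=
      Or.inr ⟨j, rfl⟩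
    set u : ℂ := xi p ^ ((i : ℤ) - (e : ℤ)) with hu
    have hdvd : (p : ℤ) ∣ ((i : ℤ) - (e : ℤ)) := by
      rw [← ZMod.intCast_zmod_eq_zero_iff_dvd]
      push_cast
      rw [he]
      push_cast
      rw [ZMod.natCast_self, mul_zero, add_zero, hjl, sub_self]
    obtain ⟨t, ht⟩ := hdvd
    have hup : u ^ p = 1 := by
      rw [hu, ← zpow_natCast (xi p ^ ((i : ℤ) - (e : ℤ))) p, ← _root_.zpow_mul, ht,
        show (p : ℤ) * t * (p : ℤ) = ((p ^ 2 : ℕ) : ℤ) * t by push_cast; ring,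
        _root_.zpow_mul, zpow_natCast, hxipp, _root_.one_zpow]
    have humem : u ∈ {x : ℂ | x ^ p = 1} ∪
        Set.range (fun j : Fin p => xi p ^ ((j : ℕ) * k + a j * p)) := Or.inl hup
    refine ⟨u, humem, v, hvmem, ?_⟩
    show u * v = x
    have hzp : (xi p) ^ ((i : ℤ) - (e : ℤ)) * (xi p) ^ ((e : ℕ) : ℤ) = (xi p) ^ ((i : ℕ) : ℤ) := by
      rw [← zpow_add₀ hxi0]
      norm_num
    rw [hu, hv, ← zpow_natCast (xi p) e, hzp, zpow_natCast, hix]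
end Aux
end

section
/- For 0 < r < 1, the semigroup 𝒮_r is (4r²/(1−r²)²)-submultiplicative: for all A, B ∈ 𝒮_r and every eigenvalue γ of AB, there exist eigenvalues α of A and β of B with |γ − αβ| ≤ (4r²/(1−r²)²)·ρ(A)·ρ(B), where ρ denotes spectral radius. -/
open Matrix
open scoped InnerProductSpace ComplexConjugate

/-- The `n × n` matrix `[[1, x*], [y, y x*]]` (with `n = m + 1`, indexed by
`Unit ⊕ Fin m`), where `x* ` denotes the conjugate-transpose row vector. -/
def srMat (m : ℕ) (x y : EuclideanSpace ℂ (Fin m)) :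
    Matrix (Unit ⊕ Fin m) (Unit ⊕ Fin m) ℂ :=
  Matrix.fromBlocks 1 (Matrix.of fun _ j => (starRingEnd ℂ) (x j))
    (Matrix.of fun i _ => y i) (Matrix.of fun i j => y i * (starRingEnd ℂ) (x j))

/-- The semigroup `𝒮_r = { λ [[1, x*], [y, y x*]] : ‖x‖, ‖y‖ < r, λ ∈ ℂ }`. -/
def srSet (m : ℕ) (r : ℝ) : Set (Matrix (Unit ⊕ Fin m) (Unit ⊕ Fin m) ℂ) :=
  {A | ∃ (x y : EuclideanSpace ℂ (Fin m)) (lam : ℂ),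
    ‖x‖ < r ∧ ‖y‖ < r ∧ A = lam • srMat m x y}

/-! ### Auxiliary lemmas: a Cauchy-Schwarz inequality for 2×2 minors of Gram matrices -/

section CS

variable {E : Type*} [NormedAddCommGroup E] [InnerProductSpace ℂ E]

private lemma quad_aux (A B C D V Q : ℝ) (hA : 0 ≤ A) (hB : 0 ≤ B) (hC : 0 ≤ C) (hD : 0 ≤ D)
    (hV : 0 ≤ V) (hQ : 0 ≤ Q) (h1 : A^2 + B^2 ≤ V^2) (h2 : C^2 + D^2 ≤ Q^2) :
    A*D + C*B ≤ V*Q := by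
  nlinarith [sq_nonneg (A*C - B*D), sq_nonneg (A*D + C*B), sq_nonneg (V - Q),
    mul_nonneg hV hQ, mul_nonneg (mul_nonneg hA hD) (mul_nonneg hC hB),
    sq_nonneg (A*D + C*B - V*Q)]

private lemma core_cs (u p v q : E) (hup : ⟪u, p⟫_ℂ = 0) :
    ‖⟪u,v⟫_ℂ * ⟪p,q⟫_ℂ - ⟪u,q⟫_ℂ * ⟪p,v⟫_ℂ‖ ≤ ‖u‖ * ‖p‖ * ‖v‖ * ‖q‖ := by
  rcases eq_or_ne u 0 with rfl | hu
  · simp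
  rcases eq_or_ne p 0 with rfl | hp
  · simp
  have hun : (0:ℝ) < ‖u‖ := norm_pos_iff.2 hu
  have hpn : (0:ℝ) < ‖p‖ := norm_pos_iff.2 hp
  set f : Fin 2 → E := ![((‖u‖:ℂ))⁻¹ • u, ((‖p‖:ℂ))⁻¹ • p] with hf
  have hon : Orthonormal ℂ f := by
    rw [orthonormal_iff_ite]
    intro i j
    fin_cases i <;> fin_cases j <;>
      simp [hf, inner_smul_left, inner_smul_right, hup, inner_eq_zero_symm.mp hup,
        inner_self_eq_norm_sq_to_K, norm_smul] <;>
      exact Or.inl (inv_mul_cancel₀ (Complex.ofReal_ne_zero.2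
        (by first | exact hun.ne' | exact hpn.ne')))
  have bess : ∀ w : E, ‖⟪u,w⟫_ℂ‖^2/‖u‖^2 + ‖⟪p,w⟫_ℂ‖^2/‖p‖^2 ≤ ‖w‖^2 := by
    intro w
    have h := hon.sum_inner_products_le (s := Finset.univ) w
    rw [Fin.sum_univ_two] at h
    have e1 : ‖⟪f 0, w⟫_ℂ‖ = ‖⟪u,w⟫_ℂ‖ / ‖u‖ := by
      simp [hf, inner_smul_left, norm_mul, map_inv₀, abs_of_pos hun, div_eq_inv_mul]
      rw [mul_comm]
    have e2 : ‖⟪f 1, w⟫_ℂ‖ = ‖⟪p,w⟫_ℂ‖ / ‖p‖ := by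
      simp [hf, inner_smul_left, norm_mul, map_inv₀, abs_of_pos hpn, div_eq_inv_mul]
      rw [mul_comm]
    rw [e1, e2, div_pow, div_pow] at h
    exact h
  have h1 := bess v
  have h2 := bess q
  calc ‖⟪u,v⟫_ℂ * ⟪p,q⟫_ℂ - ⟪u,q⟫_ℂ * ⟪p,v⟫_ℂ‖
      ≤ ‖⟪u,v⟫_ℂ‖ * ‖⟪p,q⟫_ℂ‖ + ‖⟪u,q⟫_ℂ‖ * ‖⟪p,v⟫_ℂ‖ := by
        calc _ ≤ ‖⟪u,v⟫_ℂ * ⟪p,q⟫_ℂ‖ + ‖⟪u,q⟫_ℂ * ⟪p,v⟫_ℂ‖ := norm_sub_le _ _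
          _ = _ := by rw [norm_mul, norm_mul]
    _ ≤ ‖u‖ * ‖p‖ * ‖v‖ * ‖q‖ := by
        have h3 := quad_aux (‖⟪u,v⟫_ℂ‖/‖u‖) (‖⟪p,v⟫_ℂ‖/‖p‖) (‖⟪u,q⟫_ℂ‖/‖u‖) (‖⟪p,q⟫_ℂ‖/‖p‖)
          ‖v‖ ‖q‖ (by positivity) (by positivity) (by positivity) (by positivity)
          (norm_nonneg _) (norm_nonneg _) (by rw [div_pow, div_pow]; exact h1)
          (by rw [div_pow, div_pow]; exact h2)
        rw [div_mul_div_comm, div_mul_div_comm, ← add_div,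
          div_le_iff₀ (by positivity)] at h3
        calc ‖⟪u,v⟫_ℂ‖ * ‖⟪p,q⟫_ℂ‖ + ‖⟪u,q⟫_ℂ‖ * ‖⟪p,v⟫_ℂ‖ ≤ ‖v‖ * ‖q‖ * (‖u‖ * ‖p‖) := h3
          _ = ‖u‖ * ‖p‖ * ‖v‖ * ‖q‖ := by ring

private lemma perp_norm_sq (u u' : E) (hu : u ≠ 0) :
    ‖u‖^2 * ‖u' - (⟪u,u'⟫_ℂ / (‖u‖:ℂ)^2) • u‖^2 = ‖u‖^2 * ‖u'‖^2 - ‖⟪u,u'⟫_ℂ‖^2 := by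
  have hun : (0:ℝ) < ‖u‖ := norm_pos_iff.2 hu
  have hU : ((‖u‖:ℂ))^2 ≠ 0 := pow_ne_zero 2 (Complex.ofReal_ne_zero.2 hun.ne')
  set α : ℂ := ⟪u,u'⟫_ℂ / (‖u‖:ℂ)^2 with hα
  set p : E := u' - α • u with hp
  have e0 : ⟪p,p⟫_ℂ = ⟪u',u'⟫_ℂ - conj α * ⟪u,u'⟫_ℂ - α * ⟪u',u⟫_ℂ
      + conj α * α * ⟪u,u⟫_ℂ := by
    simp only [hp, inner_sub_left, inner_sub_right, inner_smul_left, inner_smul_right]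
    ring
  have e1 : ⟪u',u⟫_ℂ = conj ⟪u,u'⟫_ℂ := (inner_conj_symm u' u).symm
  have e2 : conj α = conj ⟪u,u'⟫_ℂ / (‖u‖:ℂ)^2 := by
    rw [hα, map_div₀]
    norm_cast
    rw [Complex.conj_ofReal]
  have e3 : ((‖u‖:ℂ))^2 * ⟪p,p⟫_ℂ
      = (‖u‖:ℂ)^2 * ⟪u',u'⟫_ℂ - conj ⟪u,u'⟫_ℂ * ⟪u,u'⟫_ℂ := by
    rw [e0, e1, e2, hα, inner_self_eq_norm_sq_to_K u]
    have hN : (‖u‖:ℂ) ≠ 0 := Complex.ofReal_ne_zero.2 hun.ne'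
    rw [RCLike.ofReal_eq_complex_ofReal]
    field_simp
    ring
  rw [inner_self_eq_norm_sq_to_K p, inner_self_eq_norm_sq_to_K u'] at e3
  have e4 : conj ⟪u,u'⟫_ℂ * ⟪u,u'⟫_ℂ = ((‖⟪u,u'⟫_ℂ‖^2 : ℝ) : ℂ) := by
    rw [Complex.conj_mul']
    norm_cast
  rw [e4] at e3
  have e5 : ((‖u‖^2 * ‖p‖^2 : ℝ) : ℂ) = ((‖u‖^2*‖u'‖^2 - ‖⟪u,u'⟫_ℂ‖^2 : ℝ) : ℂ) := by
    push_cast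
    convert e3 using 2
    all_goals simp
  exact Complex.ofReal_inj.mp e5

private lemma wedge_cs (u u' v v' : E) (cu cv : ℝ) (hcu0 : 0 ≤ cu) (hcv0 : 0 ≤ cv)
    (hcu : ‖u‖^2 * ‖u'‖^2 - ‖⟪u,u'⟫_ℂ‖^2 ≤ cu^2)
    (hcv : ‖v‖^2 * ‖v'‖^2 - ‖⟪v,v'⟫_ℂ‖^2 ≤ cv^2) :
    ‖⟪u,v⟫_ℂ * ⟪u',v'⟫_ℂ - ⟪u,v'⟫_ℂ * ⟪u',v⟫_ℂ‖ ≤ cu * cv := by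
  rcases eq_or_ne u 0 with rfl | hu
  · simpa using mul_nonneg hcu0 hcv0
  rcases eq_or_ne v 0 with rfl | hv
  · simpa using mul_nonneg hcu0 hcv0
  have hun : (0:ℝ) < ‖u‖ := norm_pos_iff.2 hu
  have hvn : (0:ℝ) < ‖v‖ := norm_pos_iff.2 hv
  set α : ℂ := ⟪u,u'⟫_ℂ / (‖u‖:ℂ)^2 with hα
  set β : ℂ := ⟪v,v'⟫_ℂ / (‖v‖:ℂ)^2 with hβ
  set p : E := u' - α • u with hp
  set q : E := v' - β • v with hq
  have hU : ((‖u‖:ℂ))^2 ≠ 0 := pow_ne_zero 2 (Complex.ofReal_ne_zero.2 hun.ne')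
  have hV : ((‖v‖:ℂ))^2 ≠ 0 := pow_ne_zero 2 (Complex.ofReal_ne_zero.2 hvn.ne')
  have hup : ⟪u, p⟫_ℂ = 0 := by
    rw [hp, inner_sub_right, inner_smul_right, hα, inner_self_eq_norm_sq_to_K]
    field_simp
    simp [hU]
  have hpn : ‖u‖^2 * ‖p‖^2 = ‖u‖^2 * ‖u'‖^2 - ‖⟪u,u'⟫_ℂ‖^2 := perp_norm_sq u u' hu
  have hqn : ‖v‖^2 * ‖q‖^2 = ‖v‖^2 * ‖v'‖^2 - ‖⟪v,v'⟫_ℂ‖^2 := perp_norm_sq v v' hv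
  have hred : ⟪u,v⟫_ℂ * ⟪u',v'⟫_ℂ - ⟪u,v'⟫_ℂ * ⟪u',v⟫_ℂ
      = ⟪u,v⟫_ℂ * ⟪p,q⟫_ℂ - ⟪u,q⟫_ℂ * ⟪p,v⟫_ℂ := by
    have eu : u' = p + α • u := by rw [hp]; abel
    have ev : v' = q + β • v := by rw [hq]; abel
    rw [eu, ev]
    simp only [inner_add_left, inner_add_right, inner_smul_left, inner_smul_right]
    ring
  rw [hred]
  have hmain := core_cs u p v q hup
  have h1 : ‖u‖ * ‖p‖ ≤ cu := by
    have h2 : (‖u‖ * ‖p‖)^2 ≤ cu^2 := by rw [mul_pow]; rw [hpn] at *; linarith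
    nlinarith [norm_nonneg p, norm_nonneg u, mul_nonneg (norm_nonneg u) (norm_nonneg p)]
  have h2 : ‖v‖ * ‖q‖ ≤ cv := by
    have h2 : (‖v‖ * ‖q‖)^2 ≤ cv^2 := by rw [mul_pow]; rw [hqn] at *; linarith
    nlinarith [norm_nonneg q, norm_nonneg v, mul_nonneg (norm_nonneg v) (norm_nonneg q)]
  calc ‖⟪u,v⟫_ℂ * ⟪p,q⟫_ℂ - ⟪u,q⟫_ℂ * ⟪p,v⟫_ℂ‖ ≤ ‖u‖ * ‖p‖ * ‖v‖ * ‖q‖ := hmain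
    _ = (‖u‖ * ‖p‖) * (‖v‖ * ‖q‖) := by ring
    _ ≤ cu * cv := mul_le_mul h1 h2 (by positivity) hcu0

end CS

/-! ### Auxiliary lemmas: spectrum of a scaled rank-one matrix -/

section Spectrum

variable {ι : Type*} [Fintype ι] [DecidableEq ι]

private lemma det_vecMulVec (hcard : 1 < Fintype.card ι) (u v : ι → ℂ) :
    det (vecMulVec u v) = 0 := by
  obtain ⟨i, j, hij⟩ := Fintype.exists_pair_of_one_lt_card hcard
  have h : vecMulVec u v = of fun i' j' => v j' * (of (fun (i' : ι) (_ : ι) => u i') i' j') := by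
    ext i' j'; simp [vecMulVec_apply, mul_comm]
  rw [h, det_mul_row]
  have h2 : det (of fun (i' : ι) (_ : ι) => u i') = 0 :=
    det_zero_of_column_eq hij (fun k => rfl)
  rw [h2, mul_zero]

private lemma det_one_sub_smul_vecMulVec (d : ℂ) (u v : ι → ℂ) :
    det (1 - d • vecMulVec u v) = 1 - d * (v ⬝ᵥ u) := by
  have h : (1 : Matrix ι ι ℂ) - d • vecMulVec u v = 1 + replicateCol Unit (-(d • u)) * replicateRow Unit v := by
    rw [← vecMulVec_eq]
    ext i j
    simp [vecMulVec_apply, Matrix.sub_apply, Matrix.add_apply, Pi.smul_apply, smul_eq_mul]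
    ring
  rw [h, det_one_add_replicateCol_mul_replicateRow]
  simp only [dotProduct, Pi.neg_apply, Pi.smul_apply, smul_eq_mul, Finset.mul_sum,
    mul_neg, Finset.sum_neg_distrib]
  rw [← sub_eq_add_neg]
  congr 1
  apply Finset.sum_congr rfl
  intros
  ring

private lemma mem_spectrum_iff_det (M : Matrix ι ι ℂ) (z : ℂ) :
    z ∈ spectrum ℂ M ↔ det (z • (1 : Matrix ι ι ℂ) - M) = 0 := by
  rw [spectrum.mem_iff, Matrix.isUnit_iff_isUnit_det, isUnit_iff_ne_zero, not_ne_iff,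
    Algebra.algebraMap_eq_smul_one]

private lemma det_smul_one_sub_smul_vecMulVec {z c : ℂ} (hz : z ≠ 0) (u v : ι → ℂ) :
    det (z • (1 : Matrix ι ι ℂ) - c • vecMulVec u v)
      = z ^ (Fintype.card ι) * (1 - (c/z) * (v ⬝ᵥ u)) := by
  have h : z • (1 : Matrix ι ι ℂ) - c • vecMulVec u v
      = z • ((1 : Matrix ι ι ℂ) - (c/z) • vecMulVec u v) := by
    rw [smul_sub, smul_smul, mul_div_cancel₀ _ hz]
  rw [h, det_smul, det_one_sub_smul_vecMulVec]

private lemma zero_mem_spectrum_smul_vecMulVec (hcard : 1 < Fintype.card ι) (c : ℂ)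
    (u v : ι → ℂ) : (0 : ℂ) ∈ spectrum ℂ (c • vecMulVec u v) := by
  rw [mem_spectrum_iff_det]
  have h : c • vecMulVec u v = vecMulVec (c • u) v := by
    ext i j; simp [vecMulVec_apply]; ring
  rw [zero_smul, zero_sub, det_neg, h, det_vecMulVec hcard, mul_zero]

private lemma mem_spectrum_smul_vecMulVec (hcard : 1 < Fintype.card ι) (c : ℂ) (u v : ι → ℂ) :
    c * (v ⬝ᵥ u) ∈ spectrum ℂ (c • vecMulVec u v) := by
  rcases eq_or_ne (c * (v ⬝ᵥ u)) 0 with h0 | h0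
  · rw [h0]; exact zero_mem_spectrum_smul_vecMulVec hcard c u v
  rw [mem_spectrum_iff_det, det_smul_one_sub_smul_vecMulVec h0]
  have h : c / (c * (v ⬝ᵥ u)) * (v ⬝ᵥ u) = 1 := by
    field_simp
    exact div_self h0
  rw [h]
  simp

private lemma spectrum_smul_vecMulVec_subset (c : ℂ) (u v : ι → ℂ)
    {γ : ℂ} (hγ : γ ∈ spectrum ℂ (c • vecMulVec u v)) :
    γ = 0 ∨ γ = c * (v ⬝ᵥ u) := by
  by_contra hcon
  push_neg at hcon
  obtain ⟨h1, h2⟩ := hcon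
  rw [mem_spectrum_iff_det, det_smul_one_sub_smul_vecMulVec h1] at hγ
  rcases mul_eq_zero.mp hγ with h | h
  · exact pow_ne_zero _ h1 h
  · have h3 : c / γ * (v ⬝ᵥ u) = 1 := by linear_combination -h
    field_simp at h3
    exact h2 h3.symm

private lemma spectralRadius_smul_vecMulVec (hcard : 1 < Fintype.card ι) (c : ℂ)
    (u v : ι → ℂ) :
    (spectralRadius ℂ (c • vecMulVec u v)).toReal = ‖c * (v ⬝ᵥ u)‖ := by
  have h : spectralRadius ℂ (c • vecMulVec u v) = (‖c * (v ⬝ᵥ u)‖₊ : ENNReal) := by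
    apply le_antisymm
    · rw [spectralRadius]
      apply iSup₂_le
      intro k hk
      rcases spectrum_smul_vecMulVec_subset c u v hk with rfl | rfl
      · simp
      · exact le_refl _
    · rw [spectralRadius]
      exact le_iSup₂ (f := fun k (_ : k ∈ spectrum ℂ (c • vecMulVec u v)) => (‖k‖₊ : ENNReal))
        (c * (v ⬝ᵥ u)) (mem_spectrum_smul_vecMulVec hcard c u v)
  rw [h, ENNReal.coe_toReal, coe_nnnorm]

end Spectrum

/-! ### Auxiliary lemmas: the extension `x ↦ (1, x)` -/

section Ext

variable {m : ℕ}

private noncomputable def ext1 (x : EuclideanSpace ℂ (Fin m)) :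
    WithLp 2 (ℂ × EuclideanSpace ℂ (Fin m)) :=
  (WithLp.equiv 2 (ℂ × EuclideanSpace ℂ (Fin m))).symm (1, x)

private lemma ext1_inner (x y : EuclideanSpace ℂ (Fin m)) :
    ⟪ext1 x, ext1 y⟫_ℂ = 1 + ⟪x, y⟫_ℂ := by
  rw [ext1, ext1, WithLp.prod_inner_apply]
  simp [WithLp.equiv_symm_apply, WithLp.toLp_fst, WithLp.toLp_snd, RCLike.inner_apply]

private lemma ext1_norm_sq (x : EuclideanSpace ℂ (Fin m)) : ‖ext1 x‖^2 = 1 + ‖x‖^2 := by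
  rw [ext1, WithLp.prod_norm_sq_eq_of_L2]
  simp [WithLp.equiv_symm_apply, WithLp.toLp_fst, WithLp.toLp_snd]

private lemma ext1_wedge_bound (x x' : EuclideanSpace ℂ (Fin m)) (hx : ‖x‖ ≤ 1)
    (hx' : ‖x'‖ ≤ 1) :
    ‖ext1 x‖^2 * ‖ext1 x'‖^2 - ‖⟪ext1 x, ext1 x'⟫_ℂ‖^2 ≤ (‖x‖ + ‖x'‖)^2 := by
  rw [ext1_norm_sq, ext1_norm_sq, ext1_inner]
  have h1 : ‖⟪x, x'⟫_ℂ‖ ≤ ‖x‖ * ‖x'‖ := norm_inner_le_norm x x'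
  have h2 : 1 - ‖x‖ * ‖x'‖ ≤ ‖(1 : ℂ) + ⟪x, x'⟫_ℂ‖ := by
    have h : ‖(1:ℂ)‖ ≤ ‖(1:ℂ) + ⟪x,x'⟫_ℂ‖ + ‖⟪x,x'⟫_ℂ‖ := by
      simpa using norm_add_le ((1:ℂ) + ⟪x,x'⟫_ℂ) (-⟪x,x'⟫_ℂ)
    simp only [norm_one] at h
    linarith
  have h3 : 0 ≤ 1 - ‖x‖ * ‖x'‖ := by nlinarith [norm_nonneg x, norm_nonneg x']
  have h4 : (1 - ‖x‖ * ‖x'‖)^2 ≤ ‖(1 : ℂ) + ⟪x, x'⟫_ℂ‖^2 := by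
    nlinarith [norm_nonneg ((1:ℂ) + ⟪x,x'⟫_ℂ)]
  nlinarith [norm_nonneg x, norm_nonneg x']

/-- `srMat` is a rank-one matrix. -/
private lemma srMat_eq_vecMulVec (x y : EuclideanSpace ℂ (Fin m)) :
    srMat m x y = vecMulVec (Sum.elim (fun _ => 1) y)
      (Sum.elim (fun _ => 1) (fun j => conj (x j))) := by
  ext i j
  rcases i with i | i <;> rcases j with j | j <;>
    simp [srMat, vecMulVec_apply, fromBlocks]

private lemma vecMulVec_mul_vecMulVec {ι : Type*} [Fintype ι] (u v u' v' : ι → ℂ) :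
    vecMulVec u v * vecMulVec u' v' = (v ⬝ᵥ u') • vecMulVec u v' := by
  ext i j
  simp [vecMulVec_apply, mul_apply, dotProduct, Finset.sum_mul, Finset.mul_sum]
  exact Finset.sum_congr rfl (fun k _ => by ring)

private lemma elim_dotProduct (x y : EuclideanSpace ℂ (Fin m)) :
    (Sum.elim (fun _ => (1:ℂ)) (fun j => conj (x j)))
      ⬝ᵥ (Sum.elim (fun (_ : Unit) => (1:ℂ)) y) = 1 + ⟪x, y⟫_ℂ := by
  simp [dotProduct, Fintype.sum_sum_type, PiLp.inner_apply, RCLike.inner_apply]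
  exact Finset.sum_congr rfl fun _ _ => mul_comm _ _

end Ext

/-- `𝒮_r` is `(4r²/(1-r²)²)`-submultiplicative: for all `A, B ∈ 𝒮_r` and every
eigenvalue `γ` of `AB`, there exist eigenvalues `α` of `A` and `β` of `B` with
`|γ - αβ| ≤ (4r²/(1-r²)²)·ρ(A)·ρ(B)`, where `ρ` is the spectral radius. -/
theorem srSet_approx_submultiplicative (m : ℕ) (hm : 0 < m) (r : ℝ) (hr0 : 0 < r)
    (hr1 : r < 1) :
    ∀ A ∈ srSet m r, ∀ B ∈ srSet m r, ∀ γ ∈ spectrum ℂ (A * B),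
      ∃ α ∈ spectrum ℂ A, ∃ β ∈ spectrum ℂ B,
        ‖γ - α * β‖ ≤
          4 * r ^ 2 / (1 - r ^ 2) ^ 2 *
            ((spectralRadius ℂ A).toReal * (spectralRadius ℂ B).toReal) := by
  rintro A ⟨x, y, lam, hx, hy, rfl⟩ B ⟨x', y', mu, hx', hy', rfl⟩ γ hγ
  have hcard : 1 < Fintype.card (Unit ⊕ Fin m) := by
    simp only [Fintype.card_sum, Fintype.card_unit, Fintype.card_fin]
    omega
  set uA := Sum.elim (fun _ : Unit => (1:ℂ)) y with huA
  set vA := Sum.elim (fun _ : Unit => (1:ℂ)) (fun j => conj (x j)) with hvA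
  set uB := Sum.elim (fun _ : Unit => (1:ℂ)) y' with huB
  set vB := Sum.elim (fun _ : Unit => (1:ℂ)) (fun j => conj (x' j)) with hvB
  have hA : srMat m x y = vecMulVec uA vA := srMat_eq_vecMulVec x y
  have hB : srMat m x' y' = vecMulVec uB vB := srMat_eq_vecMulVec x' y'
  have dAA : vA ⬝ᵥ uA = 1 + ⟪x, y⟫_ℂ := elim_dotProduct x y
  have dBB : vB ⬝ᵥ uB = 1 + ⟪x', y'⟫_ℂ := elim_dotProduct x' y'
  have dAB : vA ⬝ᵥ uB = 1 + ⟪x, y'⟫_ℂ := elim_dotProduct x y'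
  have dBA : vB ⬝ᵥ uA = 1 + ⟪x', y⟫_ℂ := elim_dotProduct x' y
  have hABm : lam • srMat m x y * (mu • srMat m x' y')
      = (lam * mu * (vA ⬝ᵥ uB)) • vecMulVec uA vB := by
    rw [hA, hB, _root_.smul_mul_smul_comm, _root_.vecMulVec_mul_vecMulVec, smul_smul]
  rw [hABm] at hγ
  -- the nonzero eigenvalues
  set a : ℂ := ⟪x, y⟫_ℂ with ha
  set b : ℂ := ⟪x', y'⟫_ℂ with hb
  have hαmem : lam * (1 + a) ∈ spectrum ℂ (lam • srMat m x y) := by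
    rw [hA, ← dAA]
    exact mem_spectrum_smul_vecMulVec hcard lam uA vA
  have hβmem : mu * (1 + b) ∈ spectrum ℂ (mu • srMat m x' y') := by
    rw [hB, ← dBB]
    exact mem_spectrum_smul_vecMulVec hcard mu uB vB
  have h0A : (0:ℂ) ∈ spectrum ℂ (lam • srMat m x y) := by
    rw [hA]; exact zero_mem_spectrum_smul_vecMulVec hcard lam uA vA
  have h0B : (0:ℂ) ∈ spectrum ℂ (mu • srMat m x' y') := by
    rw [hB]; exact zero_mem_spectrum_smul_vecMulVec hcard mu uB vB
  have hρA : (spectralRadius ℂ (lam • srMat m x y)).toReal = ‖lam * (1 + a)‖ := by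
    rw [hA, spectralRadius_smul_vecMulVec hcard, dAA]
  have hρB : (spectralRadius ℂ (mu • srMat m x' y')).toReal = ‖mu * (1 + b)‖ := by
    rw [hB, spectralRadius_smul_vecMulVec hcard, dBB]
  rcases spectrum_smul_vecMulVec_subset _ uA vB hγ with rfl | rfl
  · -- γ = 0 : take α = β = 0
    refine ⟨0, h0A, 0, h0B, ?_⟩
    rw [hρA, hρB]
    simp only [mul_zero, sub_zero, map_zero, norm_zero]
    positivity
  · -- γ = λμ(1 + ⟪x,y'⟫)(1 + ⟪x',y⟫)
    refine ⟨lam * (1 + a), hαmem, mu * (1 + b), hβmem, ?_⟩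
    rw [hρA, hρB, dBA]
    set a' : ℂ := ⟪x, y'⟫_ℂ with ha'
    set b' : ℂ := ⟪x', y⟫_ℂ with hb'
    rw [dAB]
    -- the key estimate
    have hr2 : (0:ℝ) < 1 - r^2 := by nlinarith
    have hxr : ‖x‖ ≤ 1 := le_of_lt (lt_trans hx hr1)
    have hx'r : ‖x'‖ ≤ 1 := le_of_lt (lt_trans hx' hr1)
    have hyr : ‖y‖ ≤ 1 := le_of_lt (lt_trans hy hr1)
    have hy'r : ‖y'‖ ≤ 1 := le_of_lt (lt_trans hy' hr1)
    have hwedge := wedge_cs (ext1 x) (ext1 x') (ext1 y) (ext1 y')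
      (‖x‖ + ‖x'‖) (‖y‖ + ‖y'‖)
      (by positivity) (by positivity)
      (ext1_wedge_bound x x' hxr hx'r) (ext1_wedge_bound y y' hyr hy'r)
    rw [ext1_inner, ext1_inner, ext1_inner, ext1_inner, ← ha, ← hb, ← ha', ← hb'] at hwedge
    have hΔ : ‖(1 + a') * (1 + b') - (1 + a) * (1 + b)‖ ≤ (‖x‖ + ‖x'‖) * (‖y‖ + ‖y'‖) := by
      rw [norm_sub_rev]
      exact hwedge
    have hΔ4 : ‖(1 + a') * (1 + b') - (1 + a) * (1 + b)‖ ≤ 4 * r^2 := by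
      calc ‖(1 + a') * (1 + b') - (1 + a) * (1 + b)‖
          ≤ (‖x‖ + ‖x'‖) * (‖y‖ + ‖y'‖) := hΔ
        _ ≤ (r + r) * (r + r) := by
            apply mul_le_mul (by linarith) (by linarith) (by positivity) (by positivity)
        _ = 4 * r^2 := by ring
    -- lower bounds for |1 + a|, |1 + b|
    have hlow : ∀ (w z : EuclideanSpace ℂ (Fin m)), ‖w‖ < r → ‖z‖ < r →
        1 - r^2 ≤ ‖(1:ℂ) + ⟪w, z⟫_ℂ‖ := by
      intro w z hw hz
      have h1 : ‖⟪w, z⟫_ℂ‖ ≤ ‖w‖ * ‖z‖ := norm_inner_le_norm w z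
      have h2 : ‖(1:ℂ)‖ ≤ ‖(1:ℂ) + ⟪w,z⟫_ℂ‖ + ‖⟪w,z⟫_ℂ‖ := by
        simpa using norm_add_le ((1:ℂ) + ⟪w,z⟫_ℂ) (-⟪w,z⟫_ℂ)
      simp only [norm_one] at h2
      nlinarith [norm_nonneg w, norm_nonneg z]
    have hlowa : 1 - r^2 ≤ ‖(1:ℂ) + a‖ := hlow x y hx hy
    have hlowb : 1 - r^2 ≤ ‖(1:ℂ) + b‖ := hlow x' y' hx' hy'
    -- assemble
    have key : ‖(1 + a') * (1 + b') - (1 + a) * (1 + b)‖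
        ≤ 4 * r^2 / (1 - r^2)^2 * (‖(1:ℂ) + a‖ * ‖(1:ℂ) + b‖) := by
      have hC : (0:ℝ) ≤ 4 * r^2 / (1 - r^2)^2 := by positivity
      calc ‖(1 + a') * (1 + b') - (1 + a) * (1 + b)‖ ≤ 4 * r^2 := hΔ4
        _ = 4 * r^2 / (1 - r^2)^2 * ((1 - r^2) * (1 - r^2)) := by
            field_simp
        _ ≤ 4 * r^2 / (1 - r^2)^2 * (‖(1:ℂ) + a‖ * ‖(1:ℂ) + b‖) := by
            apply mul_le_mul_of_nonneg_left _ hC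
            apply mul_le_mul hlowa hlowb (le_of_lt hr2) (norm_nonneg _)
    -- multiply by |λμ|
    have hfact : lam * mu * (1 + a') * (1 + b') - lam * (1 + a) * (mu * (1 + b))
        = lam * mu * ((1 + a') * (1 + b') - (1 + a) * (1 + b)) := by ring
    rw [hfact, norm_mul, norm_mul, norm_mul]
    calc ‖lam‖ * ‖mu‖ * ‖(1 + a') * (1 + b') - (1 + a) * (1 + b)‖
        ≤ ‖lam‖ * ‖mu‖ * (4 * r^2 / (1 - r^2)^2 * (‖(1:ℂ) + a‖ * ‖(1:ℂ) + b‖)) := by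
          apply mul_le_mul_of_nonneg_left key (by positivity)
      _ = 4 * r ^ 2 / (1 - r ^ 2) ^ 2 * (‖lam‖ * ‖(1:ℂ) + a‖ * ‖mu * (1 + b)‖) := by
          rw [norm_mul]
          ring
end
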